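/- Let 1/2 < δ < 1 and V₁ > 0. Then the point E_W = (V₁/(1−δ), 0) is an equilibrium of the two-dimensional ring system and it is locally asymptotically stable: there exists an open neighborhood U of E_W such that every differentiable solution r : [0, ∞) → ℝ² of the system with r(0) ∈ U satisfies r(t) → E_W as t → ∞. -/

import Mathlib

open Filter Real Set

/-- For `1/2 < δ < 1` and `V₁ > 0`, the point `E_W = (V₁/(1-δ), 0)` is an
equilibrium of the two-dimensional ring system and is locally asymptotically
stable: there is an open neighborhood `U` of `E_W` such that every solution
starting in `U` converges to `E_W`. -/
theorem stmt2 (δ V₁ : ℝ) (hδ1 : 1/2 < δ) (hδ2 : δ < 1) (hV : 0 < V₁) :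
    (-(V₁ / (1 - δ)) + max (δ * (V₁ / (1 - δ) - 0) + V₁) 0 = 0 ∧
      -(0 : ℝ) + max (δ * (0 - V₁ / (1 - δ))) 0 = 0) ∧
    ∃ U : Set (ℝ × ℝ), IsOpen U ∧ (V₁ / (1 - δ), (0 : ℝ)) ∈ U ∧
      ∀ r₁ r₂ : ℝ → ℝ,
        (∀ t ≥ (0 : ℝ), HasDerivAt r₁ (-r₁ t + max (δ * (r₁ t - r₂ t) + V₁) 0) t) →
        (∀ t ≥ (0 : ℝ), HasDerivAt r₂ (-r₂ t + max (δ * (r₂ t - r₁ t)) 0) t) →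
        (r₁ 0, r₂ 0) ∈ U →
        Tendsto (fun t => (r₁ t, r₂ t)) atTop (nhds (V₁ / (1 - δ), 0)) := by
  have h1δ : 0 < 1 - δ := by linarith
  have hδ0 : 0 < δ := by linarith
  set a : ℝ := V₁ / (1 - δ) with ha_def
  clear_value a
  have ha : (1 - δ) * a = V₁ := by
    rw [ha_def]; field_simp
  have ha_pos : 0 < a := ha_def ▸ div_pos hV h1δ
  refine ⟨⟨?_, ?_⟩, ?_⟩
  · have h1 : δ * (a - 0) + V₁ = a := by
      rw [ha_def]; field_simp; ring
    rw [h1, max_eq_left ha_pos.le]; ring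
  · rw [max_eq_right (by nlinarith : δ * (0 - a) ≤ 0)]; ring
  · refine ⟨{p : ℝ × ℝ | p.2 < p.1}, isOpen_lt continuous_snd continuous_fst, ha_pos, ?_⟩
    intro r₁ r₂ h₁ h₂ h0
    simp only [Set.mem_setOf_eq] at h0
    -- a helper: functions with zero derivative on [0,∞) are constant there
    have const_aux : ∀ g : ℝ → ℝ, (∀ t ≥ (0:ℝ), HasDerivAt g 0 t) →
        ∀ t ≥ (0:ℝ), g t = g 0 := by
      intro g hg t ht
      exact constant_of_has_deriv_right_zero
        (fun x hx => (hg x hx.1).continuousAt.continuousWithinAt)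
        (fun x hx => (hg x hx.1).hasDerivWithinAt) t ⟨ht, le_refl t⟩
    -- Key: r₂ t < r₁ t for all t ≥ 0 (forward invariance)
    have key : ∀ t ≥ (0:ℝ), r₂ t < r₁ t := by
      by_contra hc
      push_neg at hc
      obtain ⟨t₁, ht₁0, ht₁⟩ := hc
      set u : ℝ → ℝ := fun t => r₁ t - r₂ t with hu
      have hu0 : 0 < u 0 := sub_pos.mpr h0
      have hucont : ∀ t ≥ (0:ℝ), ContinuousAt u t := fun t ht =>
        ((h₁ t ht).continuousAt.sub (h₂ t ht).continuousAt)
      set S : Set ℝ := {t | 0 ≤ t ∧ u t ≤ 0} with hS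
      have hne : S.Nonempty := ⟨t₁, ht₁0, sub_nonpos.mpr ht₁⟩
      have hbdd : BddBelow S := ⟨0, fun x hx => hx.1⟩
      set t₀ := sInf S with ht₀
      have ht₀0 : 0 ≤ t₀ := le_csInf hne fun x hx => hx.1
      have hlt : ∀ t, 0 ≤ t → t < t₀ → 0 < u t := by
        intro t ht htlt
        by_contra h
        push_neg at h
        exact absurd (csInf_le hbdd ⟨ht, h⟩) (not_le.mpr htlt)
      have hut₀_le : u t₀ ≤ 0 := by
        by_contra h
        push_neg at h
        have hev : ∀ᶠ x in nhds t₀, 0 < u x :=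
          (hucont t₀ ht₀0).eventually (eventually_gt_nhds h)
        obtain ⟨ε, hε, hball⟩ := Metric.eventually_nhds_iff.mp hev
        obtain ⟨s, hsS, hslt⟩ := exists_lt_of_csInf_lt hne (by linarith : sInf S < t₀ + ε)
        have hst₀ : t₀ ≤ s := csInf_le hbdd hsS
        have : 0 < u s := hball (by rw [Real.dist_eq, abs_of_nonneg (by linarith)]; linarith)
        exact absurd hsS.2 (not_le.mpr this)
      have ht₀pos : 0 < t₀ := by
        rcases lt_or_eq_of_le ht₀0 with h | h
        · exact h
        · exact absurd hut₀_le (not_le.mpr (h ▸ hu0))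
      have hut₀_ge : 0 ≤ u t₀ := by
        have hc : Tendsto u (nhdsWithin t₀ (Iio t₀)) (nhds (u t₀)) :=
          ((hucont t₀ ht₀0).continuousWithinAt).tendsto
        refine ge_of_tendsto hc ?_
        filter_upwards [Ioo_mem_nhdsLT_of_mem (right_mem_Ioc.mpr ht₀pos)] with x hx
        exact (hlt x hx.1.le hx.2).le
      have hut₀ : u t₀ = 0 := le_antisymm hut₀_le hut₀_ge
      have hr12 : r₁ t₀ = r₂ t₀ := by
        have := sub_eq_zero.mp hut₀
        linarith [this]
      have hd : HasDerivAt u V₁ t₀ := by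
        have h : HasDerivAt u _ t₀ := (h₁ t₀ ht₀0).sub (h₂ t₀ ht₀0)
        convert h using 1
        rw [hr12]
        simp [max_eq_left hV.le]
      have hslope := hasDerivAt_iff_tendsto_slope.mp hd
      have hslope' : Tendsto (slope u t₀) (nhdsWithin t₀ (Iio t₀)) (nhds V₁) :=
        hslope.mono_left (nhdsWithin_mono _ (fun x hx => ne_of_lt hx))
      have hle : V₁ ≤ 0 := by
        refine le_of_tendsto hslope' ?_
        filter_upwards [Ioo_mem_nhdsLT_of_mem (right_mem_Ioc.mpr ht₀pos)] with x hx
        have hx0 : 0 < u x := hlt x hx.1.le hx.2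
        rw [slope_def_field, hut₀]
        exact div_nonpos_iff.mpr (Or.inl ⟨by linarith, by linarith [hx.2]⟩)
      linarith
    -- r₂ solves r₂' = -r₂, hence r₂ t = r₂ 0 * exp (-t)
    have hr₂d : ∀ t ≥ (0:ℝ), HasDerivAt r₂ (-(r₂ t)) t := by
      intro t ht
      have h := h₂ t ht
      have hm : max (δ * (r₂ t - r₁ t)) 0 = 0 :=
        max_eq_right (by nlinarith [key t ht])
      rw [hm] at h
      simpa using h
    have hr₂ : ∀ t ≥ (0:ℝ), r₂ t = r₂ 0 * Real.exp (-t) := by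
      have hg : ∀ t ≥ (0:ℝ), HasDerivAt (fun t => r₂ t * Real.exp t) 0 t := by
        intro t ht
        have := (hr₂d t ht).mul (Real.hasDerivAt_exp t)
        refine this.congr_deriv (Eq.symm ?_)
        ring
      intro t ht
      have := const_aux _ hg t ht
      simp only [Real.exp_zero, mul_one] at this
      rw [Real.exp_neg, eq_comm, mul_inv_eq_iff_eq_mul₀ (Real.exp_ne_zero t)]
      linarith [this]
    -- r₁ solves a linear ODE; explicit solution
    have hr₁d : ∀ t ≥ (0:ℝ), HasDerivAt r₁
        (-(1 - δ) * r₁ t - δ * (r₂ 0 * Real.exp (-t)) + V₁) t := by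
      intro t ht
      have h := h₁ t ht
      have hpos : 0 ≤ δ * (r₁ t - r₂ t) + V₁ := by nlinarith [key t ht]
      rw [max_eq_left hpos] at h
      rw [← hr₂ t ht]
      convert h using 1
      ring
    have hr₁ : ∀ t ≥ (0:ℝ), r₁ t =
        a + (r₁ 0 - a - r₂ 0) * Real.exp (-(1 - δ) * t) + r₂ 0 * Real.exp (-t) := by
      have hg : ∀ t ≥ (0:ℝ), HasDerivAt
          (fun t => (r₁ t - a - r₂ 0 * Real.exp (-t)) * Real.exp ((1 - δ) * t)) 0 t := by
        intro t ht
        have hinner : HasDerivAt (fun t => r₁ t - a - r₂ 0 * Real.exp (-t))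
            ((-(1 - δ) * r₁ t - δ * (r₂ 0 * Real.exp (-t)) + V₁) -
              r₂ 0 * (Real.exp (-t) * (-1))) t := by
          have he : HasDerivAt (fun t : ℝ => r₂ 0 * Real.exp (-t))
              (r₂ 0 * (Real.exp (-t) * (-1))) t :=
            ((hasDerivAt_neg t).exp).const_mul (r₂ 0)
          exact ((hr₁d t ht).sub_const a).sub he
        have houter : HasDerivAt (fun t : ℝ => Real.exp ((1 - δ) * t))
            (Real.exp ((1 - δ) * t) * (1 - δ)) t := by
          have := ((hasDerivAt_id t).const_mul (1 - δ)).exp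
          simpa using this
        have := hinner.mul houter
        refine this.congr_deriv (Eq.symm ?_)
        have hb : ((-(1 - δ) * r₁ t - δ * (r₂ 0 * Real.exp (-t)) + V₁) -
              r₂ 0 * (Real.exp (-t) * (-1))) +
            (r₁ t - a - r₂ 0 * Real.exp (-t)) * (1 - δ) = 0 := by
          linear_combination -ha
        linear_combination (-(Real.exp ((1 - δ) * t))) * hb
      intro t ht
      have heq := const_aux _ hg t ht
      simp only [mul_zero, Real.exp_zero, mul_one, neg_zero] at heq
      have hne : Real.exp ((1 - δ) * t) ≠ 0 := Real.exp_ne_zero _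
      have hexp : Real.exp (-(1 - δ) * t) = (Real.exp ((1 - δ) * t))⁻¹ := by
        rw [← Real.exp_neg]; ring_nf
      rw [hexp]
      field_simp
      linear_combination heq
    -- limits
    have hE2 : Tendsto (fun t : ℝ => Real.exp (-t)) atTop (nhds 0) :=
      Real.tendsto_exp_neg_atTop_nhds_zero
    have hE1 : Tendsto (fun t : ℝ => Real.exp (-(1 - δ) * t)) atTop (nhds 0) := by
      have hm : Tendsto (fun t : ℝ => (1 - δ) * t) atTop atTop :=
        Tendsto.const_mul_atTop h1δ tendsto_id
      have h2 := Real.tendsto_exp_neg_atTop_nhds_zero.comp hm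
      refine h2.congr fun t => ?_
      simp only [Function.comp_apply]
      congr 1
      ring
    have hT1 : Tendsto r₁ atTop (nhds a) := by
      have h : Tendsto (fun t => a + (r₁ 0 - a - r₂ 0) * Real.exp (-(1 - δ) * t)
          + r₂ 0 * Real.exp (-t)) atTop
          (nhds (a + (r₁ 0 - a - r₂ 0) * 0 + r₂ 0 * 0)) :=
        (tendsto_const_nhds.add ((hE1.const_mul _))).add (hE2.const_mul _)
      simp only [mul_zero, add_zero] at h
      refine Tendsto.congr' ?_ h
      filter_upwards [eventually_ge_atTop (0:ℝ)] with t ht using (hr₁ t ht).symm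
    have hT2 : Tendsto r₂ atTop (nhds 0) := by
      have h : Tendsto (fun t => r₂ 0 * Real.exp (-t)) atTop (nhds (r₂ 0 * 0)) :=
        hE2.const_mul _
      simp only [mul_zero] at h
      refine Tendsto.congr' ?_ h
      filter_upwards [eventually_ge_atTop (0:ℝ)] with t ht using (hr₂ t ht).symm
    exact hT1.prodMk_nhds hT2
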